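/- Folk Theorem of Evolutionary Game Theory, part (5): let x : [0, ∞) → Δ be a solution of the replicator dynamics (each coordinate x_i is differentiable with x_i'(t) = x_i(t)((A x(t))_i − x(t) · A x(t))) with x(t) in the interior of Δ for all t ≥ 0, and suppose x(t) → p̂ as t → ∞ for some p̂ ∈ Δ. Then p̂ is a Nash equilibrium of the evolution matrix game with payoff matrix A. -/

import Mathlib

/-- Folk Theorem of Evolutionary Game Theory, part (5): if x : [0, ∞) → Δ is a
solution of the replicator dynamics lying in the interior of Δ for all t ≥ 0
and x(t) → p̂ as t → ∞ for some p̂ ∈ Δ, then p̂ is a Nash equilibrium of the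
evolution matrix game with payoff matrix A. -/
theorem limit_of_interior_orbit_is_nash {n : ℕ} (A : Matrix (Fin n) (Fin n) ℝ)
    (x : ℝ → Fin n → ℝ)
    (hmem : ∀ t ∈ Set.Ici (0:ℝ), x t ∈ stdSimplex ℝ (Fin n))
    (hint : ∀ t ∈ Set.Ici (0:ℝ), ∀ i, 0 < x t i)
    (hderiv : ∀ (i : Fin n), ∀ t ∈ Set.Ici (0:ℝ),
      HasDerivWithinAt (fun τ => x τ i)
        (x t i * ((∑ j, A i j * x t j) - ∑ k, ∑ j, x t k * A k j * x t j))
        (Set.Ici (0:ℝ)) t)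
    (p : Fin n → ℝ) (hpΔ : p ∈ stdSimplex ℝ (Fin n))
    (hlim : Filter.Tendsto x Filter.atTop (nhds p)) :
    ∀ q ∈ stdSimplex ℝ (Fin n),
      (∑ i, ∑ j, q i * A i j * p j) ≤ ∑ i, ∑ j, p i * A i j * p j := by
  by_contra hcon
  push_neg at hcon
  obtain ⟨q, hqΔ, hq⟩ := hcon
  set c : ℝ := ∑ i, ∑ j, p i * A i j * p j with hc
  -- find a pure strategy i beating the average at p
  have hq' : ∑ i, q i * c < ∑ i, q i * (∑ j, A i j * p j) := by
    calc ∑ i, q i * c = c := by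
          rw [← Finset.sum_mul, hqΔ.2, one_mul]
      _ < ∑ i, ∑ j, q i * A i j * p j := hq
      _ = ∑ i, q i * (∑ j, A i j * p j) := by
          simp [Finset.mul_sum, mul_assoc]
  obtain ⟨i, -, hi⟩ := Finset.exists_lt_of_sum_lt hq'
  have hqi : 0 < q i := by
    rcases lt_or_eq_of_le (hqΔ.1 i) with h | h
    · exact h
    · simp [← h] at hi
  have hic : c < ∑ j, A i j * p j := lt_of_mul_lt_mul_left hi hqi.le
  set ε : ℝ := ((∑ j, A i j * p j) - c) / 2 with hε
  have hεpos : 0 < ε := by simp [hε]; linarith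
  -- the "growth rate" function
  set Φ : (Fin n → ℝ) → ℝ :=
    fun y => (∑ j, A i j * y j) - ∑ k, ∑ j, y k * A k j * y j with hΦ
  have hΦc : Continuous Φ := by
    apply Continuous.sub
    · exact continuous_finset_sum _ fun j _ => (continuous_const.mul (continuous_apply j))
    · exact continuous_finset_sum _ fun k _ => continuous_finset_sum _ fun j _ =>
        (((continuous_apply k).mul continuous_const).mul (continuous_apply j))
  have hΦp : Φ p = 2 * ε := by simp [hΦ, hε]; ring
  have htend : Filter.Tendsto (fun t => Φ (x t)) Filter.atTop (nhds (Φ p)) :=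
    (hΦc.tendsto p).comp hlim
  have hev : ∀ᶠ t in Filter.atTop, ε < Φ (x t) := by
    refine htend.eventually (eventually_gt_nhds ?_)
    rw [hΦp]; linarith
  rw [Filter.eventually_atTop] at hev
  obtain ⟨T0, hT0⟩ := hev
  set T : ℝ := max T0 0 with hT
  have hT0' : (0:ℝ) ≤ T := le_max_right _ _
  have hTsub : Set.Ici T ⊆ Set.Ici (0:ℝ) := Set.Ici_subset_Ici.2 hT0'
  -- g t = x t i * exp (-ε t) is monotone on [T, ∞)
  set g : ℝ → ℝ := fun t => x t i * Real.exp (-ε * t) with hg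
  have hgderiv : ∀ t ∈ Set.Ici (0:ℝ),
      HasDerivWithinAt g
        (x t i * Φ (x t) * Real.exp (-ε * t) + x t i * (-ε * Real.exp (-ε * t)))
        (Set.Ici (0:ℝ)) t := by
    intro t ht
    have hexp : HasDerivAt (fun τ => Real.exp (-ε * τ)) (-ε * Real.exp (-ε * t)) t := by
      have h1 : HasDerivAt (fun τ : ℝ => -ε * τ) (-ε) t := by
        simpa using (hasDerivAt_id t).const_mul (-ε)
      simpa [Function.comp_def, mul_comm] using (Real.hasDerivAt_exp (-ε * t)).comp t h1
    exact (hderiv i t ht).mul hexp.hasDerivWithinAt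
  have hmono : MonotoneOn g (Set.Ici T) := by
    apply monotoneOn_of_hasDerivWithinAt_nonneg (convex_Ici T)
    · intro t ht
      exact ((hgderiv t (hTsub ht)).continuousWithinAt).mono hTsub
    · rw [interior_Ici]
      intro t ht
      exact ((hgderiv t (hTsub (Set.mem_Ici.2 (le_of_lt (Set.mem_Ioi.1 ht))))).mono
        (fun y hy => hTsub (Set.mem_Ici.2 (le_of_lt (Set.mem_Ioi.1 hy)))))
    · rw [interior_Ici]
      intro t ht
      have ht' : T ≤ t := le_of_lt ht
      have hxt : 0 < x t i := hint t (hTsub ht') i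
      have hΦt : ε < Φ (x t) := hT0 t (le_trans (le_max_left _ _) ht')
      have : x t i * Φ (x t) * Real.exp (-ε * t) + x t i * (-ε * Real.exp (-ε * t))
          = x t i * Real.exp (-ε * t) * (Φ (x t) - ε) := by ring
      rw [this]
      exact mul_nonneg (mul_nonneg hxt.le (Real.exp_pos _).le) (by linarith)
  have hgT : 0 < g T := mul_pos (hint T hT0' i) (Real.exp_pos _)
  -- exp (-ε t) → 0, so eventually exp (-ε t) < g T
  have hexp0 : Filter.Tendsto (fun t : ℝ => Real.exp (-ε * t)) Filter.atTop (nhds 0) := by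
    have : Filter.Tendsto (fun t : ℝ => ε * t) Filter.atTop Filter.atTop :=
      Filter.Tendsto.const_mul_atTop hεpos Filter.tendsto_id
    simpa [Function.comp_def, neg_mul] using Real.tendsto_exp_neg_atTop_nhds_zero.comp this
  have hev2 : ∀ᶠ t in Filter.atTop, Real.exp (-ε * t) < g T :=
    hexp0.eventually (eventually_lt_nhds hgT)
  obtain ⟨t, ht1, ht2⟩ := (hev2.and (Filter.eventually_ge_atTop T)).exists
  -- contradiction
  have hxle : x t i ≤ 1 := by
    have hm := hmem t (hTsub ht2)
    calc x t i ≤ ∑ j, x t j :=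
          Finset.single_le_sum (fun j _ => hm.1 j) (Finset.mem_univ i)
      _ = 1 := hm.2
  have : g T ≤ g t := hmono (Set.self_mem_Ici) ht2 ht2
  have : g t ≤ Real.exp (-ε * t) := by
    calc g t = x t i * Real.exp (-ε * t) := rfl
      _ ≤ 1 * Real.exp (-ε * t) := by
          exact mul_le_mul_of_nonneg_right hxle (Real.exp_pos _).le
      _ = Real.exp (-ε * t) := one_mul _
  linarith
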